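/- Fix n ≥ 3 and a circulation κ = (κ₁,…,κₙ) with all κⱼ ∈ ℝ nonzero. Let z : I → DV be a solution of z′(t) = V(z(t)). For k = 1,…,n−2 define w_k(t) = (z_k(t) − z_n(t))/(z_{n−1}(t) − z_n(t)). Then w(t) = (w₁(t),…,w_{n−2}(t)) takes values in DU and satisfies, for each k and each t ∈ I, w_k′(t) = i·U_k(w(t)) / |z_{n−1}(t) − z_n(t)|². -/

import Mathlib

/-- The point-vortex vector field `V` for circulation `κ`:
`V_j(z) = i · Σ_{k ≠ j} κ_k · (z_j − z_k) / |z_j − z_k|²`. -/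
noncomputable def vortexField {n : ℕ} (κ : Fin n → ℝ) (z : Fin n → ℂ) (j : Fin n) : ℂ :=
  Complex.I * ∑ k ∈ Finset.univ.erase j,
    (κ k : ℂ) * (z j - z k) / ((Norm.norm (z j - z k) : ℝ) : ℂ) ^ 2

/-- Membership in the phase space `DV`: all vortex positions are pairwise distinct. -/
def memDV {n : ℕ} (z : Fin n → ℂ) : Prop := ∀ j k : Fin n, j ≠ k → z j ≠ z k

/-- Membership in `DU`: all coordinates differ from `0` and `1` and are pairwise
distinct. -/
def memDU {m : ℕ} (w : Fin m → ℂ) : Prop :=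
  (∀ k, w k ≠ 0 ∧ w k ≠ 1) ∧ ∀ j k : Fin m, j ≠ k → w j ≠ w k

/-- The vector field `U` on `DU` for a circulation `κ = (κ₁,…,κ_{m+2})` of `n = m + 2`
vortices (paper indices: `κ_k` for `k ≤ n−2`, `κ_{n−1}`, `κ_n`). -/
noncomputable def uField {m : ℕ} (κ : Fin (m + 2) → ℝ) (w : Fin m → ℂ) (k : Fin m) : ℂ :=
  ((κ (k.castAdd 2) : ℂ) + (κ (Fin.last (m + 1)) : ℂ)) * w k
      / ((Norm.norm (w k) : ℝ) : ℂ) ^ 2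
  + (κ ⟨m, by omega⟩ : ℂ) * (1 + (w k - 1) / ((Norm.norm (w k - 1) : ℝ) : ℂ) ^ 2)
  - w k * (κ (k.castAdd 2) : ℂ) *
      ((1 - w k) / ((Norm.norm (1 - w k) : ℝ) : ℂ) ^ 2
        + w k / ((Norm.norm (w k) : ℝ) : ℂ) ^ 2)
  - w k * ((κ ⟨m, by omega⟩ : ℂ) + (κ (Fin.last (m + 1)) : ℂ))
  + ∑ j ∈ Finset.univ.erase k, (κ (j.castAdd 2) : ℂ) *
      ((w k - w j) / ((Norm.norm (w k - w j) : ℝ) : ℂ) ^ 2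
        + w j / ((Norm.norm (w j) : ℝ) : ℂ) ^ 2
        - w k * ((1 - w j) / ((Norm.norm (1 - w j) : ℝ) : ℂ) ^ 2
            + w j / ((Norm.norm (w j) : ℝ) : ℂ) ^ 2))


open Complex Finset in
private lemma pv_abs_sq_eq (x : ℂ) :
    ((Norm.norm x : ℝ) : ℂ) ^ 2 = x * (starRingEnd ℂ) x := by
  rw [← Complex.ofReal_pow, Complex.sq_norm, Complex.mul_conj]

private lemma pv_conj_ne {x : ℂ} (h : x ≠ 0) : (starRingEnd ℂ) x ≠ 0 := by simpa using h

open Complex Finset in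
private lemma pv_div_abs_sq (x : ℂ) (hx : x ≠ 0) :
    x / ((Norm.norm x : ℝ) : ℂ) ^ 2 = 1 / (starRingEnd ℂ) x := by
  have hx' : (starRingEnd ℂ) x ≠ 0 := pv_conj_ne hx
  rw [pv_abs_sq_eq]
  field_simp

open Complex Finset in
private lemma pv_vortex_conj {n : ℕ} (κ : Fin n → ℝ) (Z : Fin n → ℂ)
    (hZ : ∀ i j : Fin n, i ≠ j → Z i ≠ Z j) (j : Fin n) :
    vortexField κ Z j = Complex.I * ∑ l : Fin n, (κ l : ℂ) / (starRingEnd ℂ) (Z j - Z l) := by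
  unfold vortexField
  congr 1
  rw [Finset.sum_erase _ (by simp)]
  refine Finset.sum_congr rfl fun l _ => ?_
  by_cases h : l = j
  · subst h; simp
  · have hne : Z j - Z l ≠ 0 := sub_ne_zero.2 (hZ j l (Ne.symm h))
    rw [mul_div_assoc, pv_div_abs_sq _ hne, mul_one_div]

open Complex Finset in
private lemma pv_sum_split {m : ℕ} (g : Fin (m + 2) → ℂ) :
    ∑ l : Fin (m + 2), g l
      = (∑ j : Fin m, g (j.castAdd 2)) + g ⟨m, by omega⟩ + g (Fin.last (m + 1)) := by
  rw [Fin.sum_univ_castSucc, Fin.sum_univ_castSucc]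
  rfl

private lemma pv_term_alg (κj D A B C a cA cB cC ca : ℂ) (hA : A ≠ 0) (hB : B ≠ 0)
    (hC : C ≠ 0) (ha : a ≠ 0) :
    κj * ((A / a) / ((A / a) * (cA / ca)) + (B / a) / ((B / a) * (cB / ca))
        - D / a * ((C / a) / ((C / a) * (cC / ca)) + (B / a) / ((B / a) * (cB / ca))))
    = (κj / cA - κj / (-cB) - D / a * (κj / cC - κj / (-cB))) * ca := by
  have r : ∀ X Y : ℂ, X ≠ 0 → X / (X * Y) = Y⁻¹ := fun X Y hX => div_mul_cancel_left₀ hX Y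
  rw [r _ _ (div_ne_zero hA ha), r _ _ (div_ne_zero hB ha), r _ _ (div_ne_zero hC ha)]
  simp only [inv_div, div_neg]
  ring

private lemma pv_exp_alg (κk κp κq D K P a cD cK cP ca : ℂ) (hD : D ≠ 0) (hK : K ≠ 0)
    (hP : P ≠ 0) (ha : a ≠ 0) (hca : ca ≠ 0) :
    (κk + κq) * (D / a) / ((D / a) * (cD / ca))
      + κp * (1 + (K / a) / ((K / a) * (cK / ca)))
      - D / a * κk * ((P / a) / ((P / a) * (cP / ca)) + (D / a) / ((D / a) * (cD / ca)))
      - D / a * (κp + κq)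
    = ((κp / cK + κq / cD) - (κk / (-cD) + κp / (-ca))
        - D / a * ((κk / cP + κq / ca) - (κk / (-cD) + κp / (-ca)))) * ca := by
  have r : ∀ X Y : ℂ, X ≠ 0 → X / (X * Y) = Y⁻¹ := fun X Y hX => div_mul_cancel_left₀ hX Y
  simp only [mul_div_assoc]
  rw [r _ _ (div_ne_zero hD ha), r _ _ (div_ne_zero hK ha), r _ _ (div_ne_zero hP ha)]
  simp only [inv_div]
  have hY : (κk / (-cD) + κp / (-ca)) * ca = -(κk * ca / cD) - κp := by
    rw [add_mul, div_neg, div_neg, neg_mul, neg_mul, div_mul_cancel₀ _ hca]; ring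
  have hZ : (κk / cP + κq / ca) * ca = κk * ca / cP + κq := by
    rw [add_mul, div_mul_cancel₀ _ hca]; ring
  rw [show ((κp / cK + κq / cD) - (κk / (-cD) + κp / (-ca))
        - D / a * ((κk / cP + κq / ca) - (κk / (-cD) + κp / (-ca)))) * ca
      = (κp / cK + κq / cD) * ca - (κk / (-cD) + κp / (-ca)) * ca
        - D / a * ((κk / cP + κq / ca) * ca - (κk / (-cD) + κp / (-ca)) * ca) from by ring,
    hY, hZ]
  ring

open Complex Finset in
private lemma pv_term_eq (κj Zk Zp Zq Zj : ℂ) (hkj : Zk ≠ Zj) (hjq : Zj ≠ Zq)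
    (hpj : Zp ≠ Zj) (hpq : Zp ≠ Zq) :
    κj * (((Zk - Zq) / (Zp - Zq) - (Zj - Zq) / (Zp - Zq))
          / ((Norm.norm ((Zk - Zq) / (Zp - Zq) - (Zj - Zq) / (Zp - Zq)) : ℝ) : ℂ) ^ 2
        + ((Zj - Zq) / (Zp - Zq)) / ((Norm.norm ((Zj - Zq) / (Zp - Zq)) : ℝ) : ℂ) ^ 2
        - (Zk - Zq) / (Zp - Zq) *
          ((1 - (Zj - Zq) / (Zp - Zq))
              / ((Norm.norm (1 - (Zj - Zq) / (Zp - Zq)) : ℝ) : ℂ) ^ 2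
            + ((Zj - Zq) / (Zp - Zq)) / ((Norm.norm ((Zj - Zq) / (Zp - Zq)) : ℝ) : ℂ) ^ 2))
    = (κj / (starRingEnd ℂ) (Zk - Zj) - κj / (starRingEnd ℂ) (Zq - Zj)
        - (Zk - Zq) / (Zp - Zq) *
          (κj / (starRingEnd ℂ) (Zp - Zj) - κj / (starRingEnd ℂ) (Zq - Zj)))
        * (starRingEnd ℂ) (Zp - Zq) := by
  have ha : Zp - Zq ≠ 0 := sub_ne_zero.2 hpq
  have hA : Zk - Zj ≠ 0 := sub_ne_zero.2 hkj
  have hB : Zj - Zq ≠ 0 := sub_ne_zero.2 hjq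
  have hC : Zp - Zj ≠ 0 := sub_ne_zero.2 hpj
  have e1 : (Zk - Zq) / (Zp - Zq) - (Zj - Zq) / (Zp - Zq) = (Zk - Zj) / (Zp - Zq) := by
    rw [div_sub_div_same]; congr 1; ring
  have e2 : 1 - (Zj - Zq) / (Zp - Zq) = (Zp - Zj) / (Zp - Zq) := by
    rw [one_sub_div ha]; congr 1; ring
  have e3 : Zq - Zj = -(Zj - Zq) := by ring
  rw [e1, e2, e3]
  simp only [pv_abs_sq_eq]
  simp only [map_div₀, map_neg]
  exact pv_term_alg κj (Zk - Zq) (Zk - Zj) (Zj - Zq) (Zp - Zj) (Zp - Zq) _ _ _ _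
    hA hB hC ha

open Complex Finset in
private lemma pv_exp_eq (κk κp κq Zk Zp Zq : ℂ) (hkp : Zk ≠ Zp) (hkq : Zk ≠ Zq)
    (hpq : Zp ≠ Zq) :
    (κk + κq) * ((Zk - Zq) / (Zp - Zq))
        / ((Norm.norm ((Zk - Zq) / (Zp - Zq)) : ℝ) : ℂ) ^ 2
      + κp * (1 + ((Zk - Zq) / (Zp - Zq) - 1)
          / ((Norm.norm ((Zk - Zq) / (Zp - Zq) - 1) : ℝ) : ℂ) ^ 2)
      - (Zk - Zq) / (Zp - Zq) * κk *
          ((1 - (Zk - Zq) / (Zp - Zq))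
              / ((Norm.norm (1 - (Zk - Zq) / (Zp - Zq)) : ℝ) : ℂ) ^ 2
            + ((Zk - Zq) / (Zp - Zq)) / ((Norm.norm ((Zk - Zq) / (Zp - Zq)) : ℝ) : ℂ) ^ 2)
      - (Zk - Zq) / (Zp - Zq) * (κp + κq)
    = ((κk / (starRingEnd ℂ) (Zk - Zk) + κp / (starRingEnd ℂ) (Zk - Zp)
          + κq / (starRingEnd ℂ) (Zk - Zq))
        - (κk / (starRingEnd ℂ) (Zq - Zk) + κp / (starRingEnd ℂ) (Zq - Zp)
          + κq / (starRingEnd ℂ) (Zq - Zq))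
        - (Zk - Zq) / (Zp - Zq) *
          ((κk / (starRingEnd ℂ) (Zp - Zk) + κp / (starRingEnd ℂ) (Zp - Zp)
              + κq / (starRingEnd ℂ) (Zp - Zq))
            - (κk / (starRingEnd ℂ) (Zq - Zk) + κp / (starRingEnd ℂ) (Zq - Zp)
              + κq / (starRingEnd ℂ) (Zq - Zq)))) * (starRingEnd ℂ) (Zp - Zq) := by
  have ha : Zp - Zq ≠ 0 := sub_ne_zero.2 hpq
  have hD : Zk - Zq ≠ 0 := sub_ne_zero.2 hkq
  have hK : Zk - Zp ≠ 0 := sub_ne_zero.2 hkp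
  have hP : Zp - Zk ≠ 0 := sub_ne_zero.2 (Ne.symm hkp)
  simp only [sub_self, map_zero, div_zero, add_zero, zero_add]
  have e5 : (Zk - Zq) / (Zp - Zq) - 1 = (Zk - Zp) / (Zp - Zq) := by
    rw [div_sub_one ha]; congr 1; ring
  have e6 : 1 - (Zk - Zq) / (Zp - Zq) = (Zp - Zk) / (Zp - Zq) := by
    rw [one_sub_div ha]; congr 1; ring
  have e7 : Zq - Zk = -(Zk - Zq) := by ring
  have e8 : Zq - Zp = -(Zp - Zq) := by ring
  rw [e5, e6, e7, e8]
  simp only [pv_abs_sq_eq]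
  simp only [map_div₀, map_neg]
  exact pv_exp_alg κk κp κq (Zk - Zq) (Zk - Zp) (Zp - Zk) (Zp - Zq) _ _ _ _
    hD hK hP ha (pv_conj_ne ha)

private lemma pv_idx_pq {m : ℕ} : (⟨m, by omega⟩ : Fin (m + 2)) ≠ Fin.last (m + 1) := by
  simp [Fin.ext_iff]

private lemma pv_idx_jq {m : ℕ} (j : Fin m) :
    (j.castAdd 2 : Fin (m + 2)) ≠ Fin.last (m + 1) := by
  have := j.isLt; simp only [Fin.ne_iff_vne, Fin.coe_castAdd, Fin.val_last]; omega

private lemma pv_idx_jp {m : ℕ} (j : Fin m) :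
    (j.castAdd 2 : Fin (m + 2)) ≠ ⟨m, by omega⟩ := by
  have := j.isLt; simp only [Fin.ne_iff_vne, Fin.coe_castAdd]; omega

private lemma pv_idx_ee {m : ℕ} {i j : Fin m} (h : i ≠ j) :
    (i.castAdd 2 : Fin (m + 2)) ≠ j.castAdd 2 := by
  intro hc
  exact h (by ext; simpa [Fin.ext_iff] using hc)

set_option maxHeartbeats 1000000 in
open Complex Finset in
private lemma pv_key {m : ℕ} (κ : Fin (m + 2) → ℝ) (Z : Fin (m + 2) → ℂ)
    (hZ : ∀ i j : Fin (m + 2), i ≠ j → Z i ≠ Z j) (k : Fin m) :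
    ((vortexField κ Z (k.castAdd 2) - vortexField κ Z (Fin.last (m + 1))) *
          (Z ⟨m, by omega⟩ - Z (Fin.last (m + 1))) -
        (Z (k.castAdd 2) - Z (Fin.last (m + 1))) *
          (vortexField κ Z ⟨m, by omega⟩ - vortexField κ Z (Fin.last (m + 1)))) /
      (Z ⟨m, by omega⟩ - Z (Fin.last (m + 1))) ^ 2
    = Complex.I * uField κ
        (fun j => (Z (j.castAdd 2) - Z (Fin.last (m + 1))) /
          (Z ⟨m, by omega⟩ - Z (Fin.last (m + 1)))) k /
      ((Norm.norm (Z ⟨m, by omega⟩ - Z (Fin.last (m + 1))) : ℝ) : ℂ) ^ 2 := by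
  have hpq : (⟨m, by omega⟩ : Fin (m + 2)) ≠ Fin.last (m + 1) := pv_idx_pq
  have ha : Z ⟨m, by omega⟩ - Z (Fin.last (m + 1)) ≠ 0 := sub_ne_zero.2 (hZ _ _ hpq)
  have hca : (starRingEnd ℂ) (Z ⟨m, by omega⟩ - Z (Fin.last (m + 1))) ≠ 0 := pv_conj_ne ha
  have main : uField κ
        (fun j => (Z (j.castAdd 2) - Z (Fin.last (m + 1))) /
          (Z ⟨m, by omega⟩ - Z (Fin.last (m + 1)))) k
      = ((∑ l : Fin (m + 2), (κ l : ℂ) / (starRingEnd ℂ) (Z (k.castAdd 2) - Z l))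
          - (∑ l : Fin (m + 2), (κ l : ℂ) / (starRingEnd ℂ) (Z (Fin.last (m + 1)) - Z l))
          - (Z (k.castAdd 2) - Z (Fin.last (m + 1))) /
              (Z ⟨m, by omega⟩ - Z (Fin.last (m + 1))) *
            ((∑ l : Fin (m + 2), (κ l : ℂ) / (starRingEnd ℂ) (Z ⟨m, by omega⟩ - Z l))
              - (∑ l : Fin (m + 2), (κ l : ℂ) / (starRingEnd ℂ) (Z (Fin.last (m + 1)) - Z l))))
        * (starRingEnd ℂ) (Z ⟨m, by omega⟩ - Z (Fin.last (m + 1))) := by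
    rw [pv_sum_split (fun l => (κ l : ℂ) / (starRingEnd ℂ) (Z (k.castAdd 2) - Z l)),
        pv_sum_split (fun l => (κ l : ℂ) / (starRingEnd ℂ) (Z ⟨m, by omega⟩ - Z l)),
        pv_sum_split (fun l => (κ l : ℂ) / (starRingEnd ℂ) (Z (Fin.last (m + 1)) - Z l))]
    rw [← Finset.sum_erase_add Finset.univ _ (Finset.mem_univ k),
        ← Finset.sum_erase_add Finset.univ _ (Finset.mem_univ k),
        ← Finset.sum_erase_add Finset.univ _ (Finset.mem_univ k)]
    unfold uField
    beta_reduce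
    have hsum : (∑ j ∈ Finset.univ.erase k, (κ (j.castAdd 2) : ℂ) *
          (((Z (k.castAdd 2) - Z (Fin.last (m + 1))) / (Z ⟨m, by omega⟩ - Z (Fin.last (m + 1)))
              - (Z (j.castAdd 2) - Z (Fin.last (m + 1))) / (Z ⟨m, by omega⟩ - Z (Fin.last (m + 1))))
            / ((Norm.norm ((Z (k.castAdd 2) - Z (Fin.last (m + 1))) / (Z ⟨m, by omega⟩ - Z (Fin.last (m + 1)))
              - (Z (j.castAdd 2) - Z (Fin.last (m + 1))) / (Z ⟨m, by omega⟩ - Z (Fin.last (m + 1)))) : ℝ) : ℂ) ^ 2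
            + ((Z (j.castAdd 2) - Z (Fin.last (m + 1))) / (Z ⟨m, by omega⟩ - Z (Fin.last (m + 1))))
              / ((Norm.norm ((Z (j.castAdd 2) - Z (Fin.last (m + 1))) / (Z ⟨m, by omega⟩ - Z (Fin.last (m + 1)))) : ℝ) : ℂ) ^ 2
            - (Z (k.castAdd 2) - Z (Fin.last (m + 1))) / (Z ⟨m, by omega⟩ - Z (Fin.last (m + 1))) *
              ((1 - (Z (j.castAdd 2) - Z (Fin.last (m + 1))) / (Z ⟨m, by omega⟩ - Z (Fin.last (m + 1))))
                / ((Norm.norm (1 - (Z (j.castAdd 2) - Z (Fin.last (m + 1))) / (Z ⟨m, by omega⟩ - Z (Fin.last (m + 1)))) : ℝ) : ℂ) ^ 2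
              + ((Z (j.castAdd 2) - Z (Fin.last (m + 1))) / (Z ⟨m, by omega⟩ - Z (Fin.last (m + 1))))
                / ((Norm.norm ((Z (j.castAdd 2) - Z (Fin.last (m + 1))) / (Z ⟨m, by omega⟩ - Z (Fin.last (m + 1)))) : ℝ) : ℂ) ^ 2)))
        = ∑ j ∈ Finset.univ.erase k,
          ((κ (j.castAdd 2) : ℂ) / (starRingEnd ℂ) (Z (k.castAdd 2) - Z (j.castAdd 2))
            - (κ (j.castAdd 2) : ℂ) / (starRingEnd ℂ) (Z (Fin.last (m + 1)) - Z (j.castAdd 2))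
            - (Z (k.castAdd 2) - Z (Fin.last (m + 1))) / (Z ⟨m, by omega⟩ - Z (Fin.last (m + 1))) *
              ((κ (j.castAdd 2) : ℂ) / (starRingEnd ℂ) (Z ⟨m, by omega⟩ - Z (j.castAdd 2))
                - (κ (j.castAdd 2) : ℂ) / (starRingEnd ℂ) (Z (Fin.last (m + 1)) - Z (j.castAdd 2))))
            * (starRingEnd ℂ) (Z ⟨m, by omega⟩ - Z (Fin.last (m + 1))) := by
      refine Finset.sum_congr rfl fun j hj => ?_
      have hjk : j ≠ k := Finset.ne_of_mem_erase hj
      exact pv_term_eq _ _ _ _ _ (hZ _ _ (pv_idx_ee (Ne.symm hjk))) (hZ _ _ (pv_idx_jq j))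
        (hZ _ _ (Ne.symm (pv_idx_jp j))) (hZ _ _ hpq)
    rw [hsum]
    rw [show (∑ j ∈ Finset.univ.erase k,
          ((κ (j.castAdd 2) : ℂ) / (starRingEnd ℂ) (Z (k.castAdd 2) - Z (j.castAdd 2))
            - (κ (j.castAdd 2) : ℂ) / (starRingEnd ℂ) (Z (Fin.last (m + 1)) - Z (j.castAdd 2))
            - (Z (k.castAdd 2) - Z (Fin.last (m + 1))) / (Z ⟨m, by omega⟩ - Z (Fin.last (m + 1))) *
              ((κ (j.castAdd 2) : ℂ) / (starRingEnd ℂ) (Z ⟨m, by omega⟩ - Z (j.castAdd 2))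
                - (κ (j.castAdd 2) : ℂ) / (starRingEnd ℂ) (Z (Fin.last (m + 1)) - Z (j.castAdd 2))))
            * (starRingEnd ℂ) (Z ⟨m, by omega⟩ - Z (Fin.last (m + 1))))
        = ((∑ j ∈ Finset.univ.erase k, (κ (j.castAdd 2) : ℂ) / (starRingEnd ℂ) (Z (k.castAdd 2) - Z (j.castAdd 2)))
            - (∑ j ∈ Finset.univ.erase k, (κ (j.castAdd 2) : ℂ) / (starRingEnd ℂ) (Z (Fin.last (m + 1)) - Z (j.castAdd 2)))
            - (Z (k.castAdd 2) - Z (Fin.last (m + 1))) / (Z ⟨m, by omega⟩ - Z (Fin.last (m + 1))) *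
              ((∑ j ∈ Finset.univ.erase k, (κ (j.castAdd 2) : ℂ) / (starRingEnd ℂ) (Z ⟨m, by omega⟩ - Z (j.castAdd 2)))
                - (∑ j ∈ Finset.univ.erase k, (κ (j.castAdd 2) : ℂ) / (starRingEnd ℂ) (Z (Fin.last (m + 1)) - Z (j.castAdd 2)))))
            * (starRingEnd ℂ) (Z ⟨m, by omega⟩ - Z (Fin.last (m + 1))) from by
      rw [← Finset.sum_mul]; congr 1
      simp only [Finset.sum_sub_distrib, ← Finset.mul_sum]]
    rw [pv_exp_eq (κ (k.castAdd 2) : ℂ) (κ ⟨m, by omega⟩ : ℂ) (κ (Fin.last (m + 1)) : ℂ)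
        (Z (k.castAdd 2)) (Z ⟨m, by omega⟩) (Z (Fin.last (m + 1)))
        (hZ _ _ (pv_idx_jp k)) (hZ _ _ (pv_idx_jq k)) (hZ _ _ hpq)]
    ring
  rw [pv_vortex_conj κ Z hZ, pv_vortex_conj κ Z hZ, pv_vortex_conj κ Z hZ, pv_abs_sq_eq,
    main]
  have hDa : Z (k.castAdd 2) - Z (Fin.last (m + 1))
      = (Z (k.castAdd 2) - Z (Fin.last (m + 1))) / (Z ⟨m, by omega⟩ - Z (Fin.last (m + 1)))
        * (Z ⟨m, by omega⟩ - Z (Fin.last (m + 1))) := (div_mul_cancel₀ _ ha).symm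
  conv_lhs => rw [hDa]
  rw [div_eq_div_iff (pow_ne_zero 2 ha) (mul_ne_zero ha hca)]
  ring

/-- along a solution `z` of the point-vortex system of `n = m + 2 ≥ 3`
vortices, the normalized coordinates `w_k(t) = (z_k(t) − z_n(t))/(z_{n−1}(t) − z_n(t))`
lie in `DU` and satisfy `w_k′(t) = i·U_k(w(t)) / |z_{n−1}(t) − z_n(t)|²`. -/
theorem normalized_coordinates_evolution {m : ℕ} (hm : 1 ≤ m)
    (κ : Fin (m + 2) → ℝ) (hκ : ∀ j, κ j ≠ 0)
    (I : Set ℝ) (hI : I.OrdConnected)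
    (z : ℝ → Fin (m + 2) → ℂ)
    (hzDV : ∀ t ∈ I, memDV (z t))
    (hz : ∀ t ∈ I, ∀ j, HasDerivAt (fun s => z s j) (vortexField κ (z t) j) t)
    (w : ℝ → Fin m → ℂ)
    (hw : ∀ t k, w t k =
      (z t (k.castAdd 2) - z t (Fin.last (m + 1)))
        / (z t ⟨m, by omega⟩ - z t (Fin.last (m + 1)))) :
    ∀ t ∈ I,
      memDU (w t) ∧
      ∀ k, HasDerivAt (fun s => w s k)
        (Complex.I * uField κ (w t) k /
          ((Norm.norm (z t ⟨m, by omega⟩ - z t (Fin.last (m + 1))) : ℝ) : ℂ) ^ 2) t := by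
  intro t ht
  have hDV := hzDV t ht
  have ha : z t ⟨m, by omega⟩ - z t (Fin.last (m + 1)) ≠ 0 :=
    sub_ne_zero.2 (hDV _ _ pv_idx_pq)
  refine ⟨⟨fun k => ⟨?_, ?_⟩, fun i j hij => ?_⟩, fun k => ?_⟩
  · rw [hw t k]
    exact div_ne_zero (sub_ne_zero.2 (hDV _ _ (pv_idx_jq k))) ha
  · rw [hw t k]
    intro hc
    have h1 := (div_eq_one_iff_eq ha).1 hc
    exact hDV _ _ (pv_idx_jp k) (sub_left_inj.1 h1)
  · rw [hw t i, hw t j]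
    intro hc
    field_simp at hc
    exact hDV _ _ (pv_idx_ee hij) (sub_left_inj.1 hc)
  · have hwt : w t = fun j => (z t (j.castAdd 2) - z t (Fin.last (m + 1))) /
        (z t ⟨m, by omega⟩ - z t (Fin.last (m + 1))) := funext (hw t)
    have hfun : (fun s => w s k) = fun s => (z s (k.castAdd 2) - z s (Fin.last (m + 1))) /
        (z s ⟨m, by omega⟩ - z s (Fin.last (m + 1))) := funext fun s => hw s k
    rw [hwt, hfun, ← pv_key κ (z t) hDV k]
    exact ((hz t ht (k.castAdd 2)).sub (hz t ht (Fin.last (m + 1)))).div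
      ((hz t ht ⟨m, by omega⟩).sub (hz t ht (Fin.last (m + 1)))) ha
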